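/- Every game on a finite player set can be written as the difference of two nonnegative totally monotone games. -/

import Mathlib

open Finset

def TotallyMonotone {N : Type*} [DecidableEq N] (v : Finset N → ℝ) : Prop :=
  ∀ (k : ℕ), 2 ≤ k → ∀ A : Fin k → Finset N,
    ∑ I ∈ ((univ : Finset (Fin k)).powerset.filter Finset.Nonempty).attach,
        (-1 : ℝ) ^ (I.1.card + 1) * v (I.1.inf' (Finset.mem_filter.mp I.2).2 A)
      ≤ v (univ.sup A)

lemma tm_unanimity {N : Type*} [DecidableEq N] (T : Finset N) :
    TotallyMonotone (fun A => if T ⊆ A then (1:ℝ) else 0) := by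
  intro k hk A
  classical
  set S : Finset (Fin k) := univ.filter (fun i => T ⊆ A i) with hS
  have key : ∀ I : {x // x ∈ ((univ : Finset (Fin k)).powerset.filter Finset.Nonempty)},
      (-1 : ℝ) ^ (I.1.card + 1) *
        (if T ⊆ I.1.inf' (Finset.mem_filter.mp I.2).2 A then (1:ℝ) else 0)
      = (-1 : ℝ) ^ (I.1.card + 1) * (if I.1 ⊆ S then (1:ℝ) else 0) := by
    intro I
    congr 1
    have h1 : (T ⊆ I.1.inf' (Finset.mem_filter.mp I.2).2 A) ↔ I.1 ⊆ S := by
      rw [show (T ⊆ I.1.inf' (Finset.mem_filter.mp I.2).2 A) ↔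
          T ≤ I.1.inf' (Finset.mem_filter.mp I.2).2 A from Iff.rfl, Finset.le_inf'_iff]
      constructor
      · intro h i hi; simp only [hS, Finset.mem_filter, Finset.mem_univ, true_and]
        exact h i hi
      · intro h i hi; have := h hi; simp only [hS, Finset.mem_filter] at this; exact this.2
    simp only [h1]
  rw [Finset.sum_congr rfl (fun I _ => key I)]
  rw [Finset.sum_attach _ (fun I => (-1 : ℝ) ^ (I.card + 1) * (if I ⊆ S then (1:ℝ) else 0))]
  have hsplit :
      ∑ I ∈ ((univ : Finset (Fin k)).powerset.filter Finset.Nonempty),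
        (-1 : ℝ) ^ (I.card + 1) * (if I ⊆ S then (1:ℝ) else 0)
      = (∑ I ∈ (univ : Finset (Fin k)).powerset,
          (-1 : ℝ) ^ (I.card + 1) * (if I ⊆ S then (1:ℝ) else 0)) + 1 := by
    rw [← Finset.sum_filter_add_sum_filter_not ((univ : Finset (Fin k)).powerset)
        Finset.Nonempty (fun I => (-1 : ℝ) ^ (I.card + 1) * (if I ⊆ S then (1:ℝ) else 0))]
    have h2 : ((univ : Finset (Fin k)).powerset.filter (fun I => ¬ I.Nonempty)) = {∅} := by
      ext I
      simp [Finset.not_nonempty_iff_eq_empty]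
    rw [h2]
    simp
  rw [hsplit]
  have hps : ∑ I ∈ (univ : Finset (Fin k)).powerset,
      (-1 : ℝ) ^ (I.card + 1) * (if I ⊆ S then (1:ℝ) else 0)
      = if S = ∅ then -1 else 0 := by
    simp only [mul_ite, mul_one, mul_zero]
    rw [← Finset.sum_filter]
    have h3 : ((univ : Finset (Fin k)).powerset.filter (fun I => I ⊆ S)) = S.powerset := by
      ext I; simp [Finset.mem_powerset]
    rw [h3]
    have h4 := Finset.sum_powerset_neg_one_pow_card (x := S)
    have h5 : ∑ I ∈ S.powerset, (-1 : ℝ) ^ I.card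
        = if S = ∅ then (1:ℝ) else 0 := by
      have := congrArg (fun z : ℤ => (z : ℝ)) h4
      push_cast at this
      simpa using this
    simp only [pow_succ, ← Finset.sum_mul, h5]
    split_ifs <;> ring
  rw [hps]
  by_cases hSe : S = ∅
  · simp only [if_pos hSe]
    norm_num
    positivity
  · simp only [if_neg hSe]
    obtain ⟨i, hi⟩ := Finset.nonempty_iff_ne_empty.mpr hSe
    simp only [hS, Finset.mem_filter] at hi
    have : T ⊆ univ.sup A := hi.2.trans (Finset.le_sup (Finset.mem_univ i))
    simp [this]

lemma tm_sum {N ι : Type*} [DecidableEq N] (s : Finset ι) (f : ι → Finset N → ℝ)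
    (hf : ∀ i ∈ s, TotallyMonotone (f i)) :
    TotallyMonotone (fun A => ∑ i ∈ s, f i A) := by
  intro k hk A
  simp only [Finset.mul_sum]
  rw [Finset.sum_comm]
  exact Finset.sum_le_sum fun i hi => hf i hi k hk A

lemma tm_smul {N : Type*} [DecidableEq N] (c : ℝ) (hc : 0 ≤ c) (f : Finset N → ℝ)
    (hf : TotallyMonotone f) :
    TotallyMonotone (fun A => c * f A) := by
  intro k hk A
  have h := hf k hk A
  calc ∑ I ∈ ((univ : Finset (Fin k)).powerset.filter Finset.Nonempty).attach,
        (-1 : ℝ) ^ (I.1.card + 1) * (c * f (I.1.inf' (Finset.mem_filter.mp I.2).2 A))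
      = c * ∑ I ∈ ((univ : Finset (Fin k)).powerset.filter Finset.Nonempty).attach,
        (-1 : ℝ) ^ (I.1.card + 1) * f (I.1.inf' (Finset.mem_filter.mp I.2).2 A) := by
        rw [Finset.mul_sum]; apply Finset.sum_congr rfl; intros; ring
    _ ≤ c * f (univ.sup A) := mul_le_mul_of_nonneg_left h hc

lemma mobius_inv {N : Type*} [DecidableEq N] (v : Finset N → ℝ) (A : Finset N) :
    ∑ B ∈ A.powerset, ∑ C ∈ B.powerset, (-1:ℝ) ^ ((B \ C).card) * v C = v A := by
  classical
  have hstep : ∀ B ∈ A.powerset,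
      ∑ C ∈ B.powerset, (-1:ℝ) ^ ((B \ C).card) * v C
      = ∑ C ∈ A.powerset, if C ⊆ B then (-1:ℝ) ^ ((B \ C).card) * v C else 0 := by
    intro B hB
    rw [← Finset.sum_filter]
    apply Finset.sum_congr _ (fun _ _ => rfl)
    ext C
    simp only [Finset.mem_powerset, Finset.mem_filter]
    rw [Finset.mem_powerset] at hB
    exact ⟨fun h => ⟨h.trans hB, h⟩, fun h => h.2⟩
  rw [Finset.sum_congr rfl hstep, Finset.sum_comm]
  have hinner : ∀ C ∈ A.powerset,
      ∑ B ∈ A.powerset, (if C ⊆ B then (-1:ℝ) ^ ((B \ C).card) * v C else 0)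
      = (if A = C then 1 else 0) * v C := by
    intro C hC
    rw [Finset.mem_powerset] at hC
    rw [← Finset.sum_filter]
    have hbij : ∑ B ∈ A.powerset.filter (fun B => C ⊆ B), (-1:ℝ) ^ ((B \ C).card) * v C
        = ∑ D ∈ (A \ C).powerset, (-1:ℝ) ^ (D.card) * v C := by
      apply Finset.sum_nbij' (fun B => B \ C) (fun D => D ∪ C)
      · intro B hB
        simp only [Finset.mem_filter, Finset.mem_powerset] at hB ⊢
        exact Finset.sdiff_subset_sdiff hB.1 (le_refl C)
      · intro D hD
        simp only [Finset.mem_powerset] at hD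
        simp only [Finset.mem_filter, Finset.mem_powerset]
        constructor
        · exact Finset.union_subset ((hD.trans (Finset.sdiff_subset))) hC
        · exact Finset.subset_union_right
      · intro B hB
        simp only [Finset.mem_filter] at hB
        exact Finset.sdiff_union_of_subset hB.2
      · intro D hD
        simp only [Finset.mem_powerset] at hD
        have hdisj : Disjoint C D := Finset.disjoint_left.mpr
          fun a ha hb => (Finset.mem_sdiff.mp (hD hb)).2 ha
        rw [Finset.union_sdiff_right, _root_.sdiff_eq_self_iff_disjoint.mpr hdisj]
      · intro B hB
        rfl
    rw [hbij, ← Finset.sum_mul]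
    have h5 : ∑ D ∈ (A \ C).powerset, (-1:ℝ) ^ D.card
        = if A \ C = ∅ then (1:ℝ) else 0 := by
      have h4 := Finset.sum_powerset_neg_one_pow_card (x := A \ C)
      have := congrArg (fun z : ℤ => (z : ℝ)) h4
      push_cast at this
      simpa using this
    rw [h5]
    congr 1
    have h6 : A \ C = ∅ ↔ A = C := by
      rw [Finset.sdiff_eq_empty_iff_subset]
      exact ⟨fun h => Finset.Subset.antisymm h hC, fun h => h ▸ le_refl _⟩
    simp only [h6]
  rw [Finset.sum_congr rfl hinner]
  simp only [ite_mul, one_mul, zero_mul]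
  rw [Finset.sum_ite_eq]
  simp [Finset.mem_powerset_self]

theorem stmt16 {N : Type*} [Fintype N] [DecidableEq N]
    (v : Finset N → ℝ) (hv : v ∅ = 0) :
    ∃ w₁ w₂ : Finset N → ℝ,
      w₁ ∅ = 0 ∧ w₂ ∅ = 0 ∧
      TotallyMonotone w₁ ∧ TotallyMonotone w₂ ∧
      (∀ A, 0 ≤ w₁ A) ∧ (∀ A, 0 ≤ w₂ A) ∧
      v = w₁ - w₂ := by
  classical
  set m : Finset N → ℝ := fun B => ∑ C ∈ B.powerset, (-1:ℝ) ^ ((B \ C).card) * v C with hm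
  set 𝒯 : Finset (Finset N) := (univ : Finset N).powerset.filter Finset.Nonempty with hT
  refine ⟨fun A => ∑ T ∈ 𝒯, max (m T) 0 * (if T ⊆ A then (1:ℝ) else 0),
          fun A => ∑ T ∈ 𝒯, max (-(m T)) 0 * (if T ⊆ A then (1:ℝ) else 0), ?_, ?_, ?_, ?_, ?_, ?_, ?_⟩
  · apply Finset.sum_eq_zero
    intro T hTm
    simp only [hT, Finset.mem_filter] at hTm
    rw [if_neg, mul_zero]
    intro hsub
    exact (Finset.not_nonempty_empty (hTm.2.mono hsub))
  · apply Finset.sum_eq_zero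
    intro T hTm
    simp only [hT, Finset.mem_filter] at hTm
    rw [if_neg, mul_zero]
    intro hsub
    exact (Finset.not_nonempty_empty (hTm.2.mono hsub))
  · exact tm_sum _ _ fun T _ => tm_smul _ (le_max_right _ _) _ (tm_unanimity T)
  · exact tm_sum _ _ fun T _ => tm_smul _ (le_max_right _ _) _ (tm_unanimity T)
  · intro A
    apply Finset.sum_nonneg
    intro T _
    apply mul_nonneg (le_max_right _ _)
    split_ifs <;> norm_num
  · intro A
    apply Finset.sum_nonneg
    intro T _
    apply mul_nonneg (le_max_right _ _)
    split_ifs <;> norm_num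
  · funext A
    simp only [Pi.sub_apply]
    rw [← Finset.sum_sub_distrib]
    have hterm : ∀ T ∈ 𝒯,
        max (m T) 0 * (if T ⊆ A then (1:ℝ) else 0)
          - max (-(m T)) 0 * (if T ⊆ A then (1:ℝ) else 0)
        = if T ⊆ A then m T else 0 := by
      intro T _
      have : max (m T) 0 - max (-(m T)) 0 = m T := by
        rcases le_total (m T) 0 with h | h
        · rw [max_eq_right h, max_eq_left (by linarith)]; ring
        · rw [max_eq_left h, max_eq_right (by linarith)]; ring
      split_ifs with hsub <;> simp [this]
    rw [Finset.sum_congr rfl hterm, ← Finset.sum_filter]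
    have hfil : 𝒯.filter (fun T => T ⊆ A) = A.powerset.filter Finset.Nonempty := by
      ext T
      simp only [hT, Finset.mem_filter, Finset.mem_powerset]
      exact ⟨fun h => ⟨h.2, h.1.2⟩, fun h => ⟨⟨Finset.subset_univ T, h.2⟩, h.1⟩⟩
    rw [hfil]
    have hsplit := Finset.sum_filter_add_sum_filter_not A.powerset Finset.Nonempty m
    have hne : A.powerset.filter (fun T => ¬ T.Nonempty) = {∅} := by
      ext T
      simp only [Finset.mem_filter, Finset.mem_powerset,
        Finset.not_nonempty_iff_eq_empty, Finset.mem_singleton]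
      exact ⟨fun h => h.2, fun h => ⟨h ▸ Finset.empty_subset A, h⟩⟩
    have hm0 : m ∅ = 0 := by
      simp [hm, hv]
    have hmob := mobius_inv v A
    have : ∑ T ∈ A.powerset, m T = v A := by
      rw [← hmob]
    rw [hne] at hsplit
    simp only [Finset.sum_singleton, hm0, add_zero] at hsplit
    rw [hsplit, this]
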